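/- Let 1 ≤ k ≤ n be an integer and let λ ∈ Γ_k. Then σ_{k-1}(λ|i) > 0 for every index 1 ≤ i ≤ n. -/
import Mathlib


/-- The `k`-th elementary symmetric function of `x` restricted to the index set `s`. -/
noncomputable def sigmaEOn {ι : Type*} [DecidableEq ι] (s : Finset ι) (k : ℕ) (x : ι → ℝ) : ℝ :=
  ∑ t ∈ s.powersetCard k, ∏ i ∈ t, x i

/-- The `k`-th elementary symmetric function `σ_k(x)`. -/
noncomputable def sigmaE {ι : Type*} [Fintype ι] [DecidableEq ι] (k : ℕ) (x : ι → ℝ) : ℝ :=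
  sigmaEOn Finset.univ k x

/-- The Gårding cone `Γ_k ⊆ ℝ^n`. -/
def gardingCone (n k : ℕ) : Set (Fin n → ℝ) :=
  {lam | ∀ j : ℕ, 1 ≤ j → j ≤ k → 0 < sigmaE j lam}

open Finset Polynomial

variable {ι : Type*} [DecidableEq ι]


variable {ι : Type*} [DecidableEq ι]

lemma sigmaEOn_zero (s : Finset ι) (x : ι → ℝ) : sigmaEOn s 0 x = 1 := by
  simp [sigmaEOn]

lemma sigmaEOn_of_card_lt {s : Finset ι} {k : ℕ} (h : s.card < k) (x : ι → ℝ) :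
    sigmaEOn s k x = 0 := by
  rw [sigmaEOn, Finset.powersetCard_eq_empty.2 h, Finset.sum_empty]

lemma sigmaEOn_insert {a : ι} {s : Finset ι} (h : a ∉ s) (k : ℕ) (x : ι → ℝ) :
    sigmaEOn (insert a s) (k+1) x = sigmaEOn s (k+1) x + x a * sigmaEOn s k x := by
  unfold sigmaEOn
  rw [Finset.powersetCard_succ_insert h, Finset.sum_union, Finset.sum_image]
  · congr 1
    rw [Finset.mul_sum]
    refine Finset.sum_congr rfl fun t ht => ?_
    rw [Finset.prod_insert fun hat => h ((Finset.mem_powersetCard.1 ht).1 hat)]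
  · intro t ht u hu htu
    have h1 : a ∉ t := fun hat => h ((Finset.mem_powersetCard.1 ht).1 hat)
    have h2 : a ∉ u := fun hat => h ((Finset.mem_powersetCard.1 hu).1 hat)
    rw [← Finset.erase_insert h1, htu, Finset.erase_insert h2]
  · rw [Finset.disjoint_right]
    intro t ht ht'
    rw [Finset.mem_image] at ht
    obtain ⟨u, hu, rfl⟩ := ht
    exact h ((Finset.mem_powersetCard.1 ht').1 (Finset.mem_insert_self a u))

lemma sigmaEOn_erase {i : ι} {s : Finset ι} (h : i ∈ s) (k : ℕ) (x : ι → ℝ) :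
    sigmaEOn s (k+1) x = sigmaEOn (s.erase i) (k+1) x + x i * sigmaEOn (s.erase i) k x := by
  conv_lhs => rw [← Finset.insert_erase h]
  exact sigmaEOn_insert (Finset.notMem_erase i s) k x

lemma sigmaEOn_pos {s : Finset ι} {x : ι → ℝ} (hx : ∀ i ∈ s, 0 < x i) {k : ℕ} (hk : k ≤ s.card) :
    0 < sigmaEOn s k x := by
  unfold sigmaEOn
  apply Finset.sum_pos
  · intro t ht
    rw [Finset.mem_powersetCard] at ht
    exact Finset.prod_pos fun i hi => hx i (ht.1 hi)
  · exact Finset.powersetCard_nonempty.2 hk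

lemma sigmaEOn_eq_esymm (s : Finset ι) (k : ℕ) (x : ι → ℝ) :
    sigmaEOn s k x = (s.val.map x).esymm k := (Finset.esymm_map_val x s k).symm

lemma continuous_sigmaEOn {n : ℕ} (s : Finset (Fin n)) (k : ℕ) :
    Continuous (fun x : Fin n → ℝ => sigmaEOn s k x) := by
  unfold sigmaEOn
  exact continuous_finset_sum _ fun t _ => continuous_finset_prod _ fun i _ => continuous_apply i


lemma msum_nonneg {A : Multiset ℝ} (h : ∀ a ∈ A, 0 ≤ a) : 0 ≤ A.sum := by
  induction A using Multiset.induction with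
  | empty => simp
  | cons a s ih =>
    rw [Multiset.sum_cons]
    have := h a (Multiset.mem_cons_self a s)
    have := ih fun b hb => h b (Multiset.mem_cons_of_mem hb)
    linarith

lemma msum_pos {A : Multiset ℝ} (h : ∀ a ∈ A, 0 < a) (h0 : A ≠ 0) : 0 < A.sum := by
  obtain ⟨a, ha⟩ := Multiset.exists_mem_of_ne_zero h0
  obtain ⟨s, rfl⟩ := Multiset.exists_cons_of_mem ha
  rw [Multiset.sum_cons]
  have h1 := h a (Multiset.mem_cons_self a s)
  have h2 := msum_nonneg (A := s) fun b hb => (h b (Multiset.mem_cons_of_mem hb)).le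
  linarith

lemma mprod_pos {A : Multiset ℝ} (h : ∀ a ∈ A, 0 < a) : 0 < A.prod := by
  induction A using Multiset.induction with
  | empty => simp
  | cons a s ih =>
    rw [Multiset.prod_cons]
    exact mul_pos (h a (Multiset.mem_cons_self a s))
      (ih fun b hb => h b (Multiset.mem_cons_of_mem hb))

lemma mesymm_zero (A : Multiset ℝ) : A.esymm 0 = 1 := by
  simp [Multiset.esymm]

lemma mesymm_pos {A : Multiset ℝ} (hA : ∀ a ∈ A, 0 < a) {k : ℕ} (hk : k ≤ Multiset.card A) :
    0 < A.esymm k := by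
  rw [Multiset.esymm]
  apply msum_pos
  · intro p hp
    rw [Multiset.mem_map] at hp
    obtain ⟨t, ht, rfl⟩ := hp
    rw [Multiset.mem_powersetCard] at ht
    exact mprod_pos fun a ha => hA a (Multiset.mem_of_le ht.1 ha)
  · intro hzero
    have h1 : Multiset.card ((A.powersetCard k).map Multiset.prod) = (Multiset.card A).choose k := by
      rw [Multiset.card_map, Multiset.card_powersetCard]
    rw [hzero] at h1
    simp at h1
    exact absurd h1.symm (Nat.choose_pos hk).ne'

lemma key_newton (j : ℕ) (hj : 1 ≤ j) :
    ∀ (m : ℕ) (A : Multiset ℝ), Multiset.card A = m → j + 1 ≤ m →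
      (∀ r, 1 ≤ r → r < j → 0 < A.esymm r) → A.esymm j = 0 → 0 < A.esymm (j+1) → False := by
  intro m
  induction m using Nat.strong_induction_on with
  | _ m ih =>
  intro A hcard hjm hpos hzero hpos1
  set q : Polynomial ℝ := (A.map fun a => X + C a).prod with hq
  have hmonic : q.Monic := monic_multiset_prod_of_monic _ _ fun a _ => monic_X_add_C a
  have hdeg : q.natDegree = m := by
    rw [hq, natDegree_multiset_prod_of_monic _ fun a _ => by
      rw [Multiset.mem_map] at *; obtain ⟨b, _, rfl⟩ := ‹∃ b ∈ A, X + C b = _›; exact monic_X_add_C b]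
    rw [Multiset.map_map]
    simp [Function.comp, natDegree_X_add_C, hcard]
  have hcoeff : ∀ r ≤ m, q.coeff (m - r) = A.esymm r := by
    intro r hr
    rw [hq, Multiset.prod_X_add_C_coeff A (by omega : m - r ≤ Multiset.card A)]
    · congr 1; omega
  have hroots : q.roots = A.map (fun a => -a) := by
    have h2 : (A.map fun a => X + C a) = ((A.map fun a => -a).map fun a => X - C a) := by
      rw [Multiset.map_map]
      apply Multiset.map_congr rfl
      intro a _
      simp [sub_neg_eq_add]
    rw [hq, h2, roots_multiset_prod_X_sub_C]
  rcases eq_or_lt_of_le hjm with hm | hm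
  · -- base case: m = j + 1
    have hge : ∀ r ≤ m, 0 ≤ A.esymm r := by
      intro r hr
      rcases Nat.eq_zero_or_pos r with h0 | h1
      · subst h0; rw [mesymm_zero]; norm_num
      rcases lt_trichotomy r j with h | h | h
      · exact (hpos r h1 h).le
      · subst h; exact le_of_eq hzero.symm
      · have : r = j + 1 := by omega
        subst this; exact hpos1.le
    have hcoeffge : ∀ s, 0 ≤ q.coeff s := by
      intro s
      rcases le_or_gt s m with hs | hs
      · have : q.coeff s = A.esymm (m - s) := by
          have := hcoeff (m - s) (by omega)
          rwa [show m - (m - s) = s by omega] at this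
        rw [this]; exact hge _ (by omega)
      · rw [coeff_eq_zero_of_natDegree_lt (by omega : q.natDegree < s)]
    have heval : ∀ x : ℝ, 0 ≤ x → 0 < q.eval x := by
      intro x hx
      rw [eval_eq_sum_range]
      have h0mem : (0 : ℕ) ∈ Finset.range (q.natDegree + 1) := by simp
      have hc0 : 0 < q.coeff 0 := by
        have := hcoeff m le_rfl
        rw [Nat.sub_self] at this
        rw [this, ← hm]
        exact hpos1
      calc (0:ℝ) < q.coeff 0 * x ^ 0 := by simpa using hc0
        _ ≤ ∑ i ∈ Finset.range (q.natDegree + 1), q.coeff i * x ^ i :=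
          Finset.single_le_sum (fun i _ => mul_nonneg (hcoeffge i) (pow_nonneg hx i)) h0mem
    have hall : ∀ a ∈ A, 0 < a := by
      intro a ha
      by_contra hle
      push_neg at hle
      have hev : q.eval (-a) = 0 := by
        rw [hq, eval_multiset_prod]
        apply Multiset.prod_eq_zero
        rw [Multiset.map_map, Multiset.mem_map]
        exact ⟨a, ha, by simp⟩
      have := heval (-a) (by linarith)
      rw [hev] at this
      exact lt_irrefl 0 this
    have := mesymm_pos hall (k := j) (by omega)
    rw [hzero] at this
    exact lt_irrefl 0 this
  · -- inductive step: j + 1 < m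
    set q' := derivative q with hq'
    have hm1 : 1 ≤ m := by omega
    have hcoefftop : q'.coeff (m - 1) = (m : ℝ) := by
      rw [hq', coeff_derivative, show m - 1 + 1 = m by omega]
      have : q.coeff m = 1 := by
        have := hmonic.coeff_natDegree
        rwa [hdeg] at this
      rw [this]
      push_cast [show ((m - 1 : ℕ) : ℝ) = (m : ℝ) - 1 by push_cast [Nat.cast_sub hm1]; ring]
      ring
    have hq'deg : q'.natDegree = m - 1 := by
      have hub := natDegree_derivative_le q
      rw [hdeg, ← hq'] at hub
      have hlb : m - 1 ≤ q'.natDegree := le_natDegree_of_ne_zero (by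
        rw [hcoefftop]; positivity)
      omega
    have hrootsq : Multiset.card q.roots = m := by rw [hroots, Multiset.card_map, hcard]
    have hcardroots : Multiset.card q'.roots = m - 1 := by
      have h2 := q.card_roots_le_derivative
      have h3 := q'.card_roots'
      rw [hrootsq, ← hq'] at h2
      rw [hq'deg] at h3
      omega
    set B := q'.roots.map (fun x : ℝ => -x) with hB
    have hcardB : Multiset.card B = m - 1 := by rw [hB, Multiset.card_map, hcardroots]
    have hlc : q'.leadingCoeff = (m : ℝ) := by
      rw [Polynomial.leadingCoeff, hq'deg, hcoefftop]
    have hesymmB : ∀ r ≤ m - 1, B.esymm r = ((m - r : ℕ) : ℝ) / m * A.esymm r := by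
      intro r hr
      have hv := Polynomial.coeff_eq_esymm_roots_of_card
        (by rw [hcardroots, hq'deg] : Multiset.card q'.roots = q'.natDegree)
        (show m - 1 - r ≤ q'.natDegree by rw [hq'deg]; omega)
      rw [hq'deg, hlc, show m - 1 - (m - 1 - r) = r by omega] at hv
      have hBr : B.esymm r = (-1 : ℝ) ^ r * q'.roots.esymm r := by
        rw [hB]
        exact Multiset.esymm_neg q'.roots r
      have hd : q'.coeff (m - 1 - r) = A.esymm r * ((m - r : ℕ) : ℝ) := by
        rw [hq', coeff_derivative, show m - 1 - r + 1 = m - r by omega, hcoeff r (by omega)]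
        congr 1
        push_cast [Nat.cast_sub (by omega : r ≤ m), Nat.cast_sub (by omega : r + 1 ≤ m)]
        push_cast [show ((m - 1 - r : ℕ) : ℝ) = (m : ℝ) - 1 - r by
          push_cast [Nat.cast_sub (by omega : r ≤ m - 1), Nat.cast_sub hm1]; ring]
        ring
      have hm0 : (m : ℝ) ≠ 0 := by positivity
      have hcomb : (m : ℝ) * ((-1:ℝ)^r * q'.roots.esymm r) = A.esymm r * ((m - r : ℕ) : ℝ) := by
        rw [← hd, hv]; ring
      rw [hBr]
      field_simp
      linear_combination hcomb
    refine ih (m - 1) (by omega) B hcardB (by omega) ?_ ?_ ?_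
    · intro r h1 h2
      rw [hesymmB r (by omega)]
      have hmr : (0 : ℝ) < ((m - r : ℕ) : ℝ) := by
        exact_mod_cast (by omega : 0 < m - r)
      exact mul_pos (div_pos hmr (by positivity)) (hpos r h1 h2)
    · rw [hesymmB j (by omega), hzero]; ring
    · rw [hesymmB (j+1) (by omega)]
      have hmr : (0 : ℝ) < ((m - (j+1) : ℕ) : ℝ) := by
        exact_mod_cast (by omega : 0 < m - (j+1))
      exact mul_pos (div_pos hmr (by positivity)) hpos1

lemma card_filter_superset {s S : Finset ι} (hS : S ⊆ s) {j : ℕ} (hj : S.card ≤ j) :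
    ((s.powersetCard j).filter (fun T => S ⊆ T)).card = (s.card - S.card).choose (j - S.card) := by
  rw [← Finset.card_sdiff_of_subset hS, ← Finset.card_powersetCard]
  apply Finset.card_bij' (fun T _ => T \ S) (fun U _ => U ∪ S)
  · intro T hT
    rw [Finset.mem_filter, Finset.mem_powersetCard] at hT
    rw [Finset.mem_powersetCard]
    exact ⟨Finset.sdiff_subset_sdiff hT.1.1 le_rfl, by rw [Finset.card_sdiff_of_subset hT.2, hT.1.2]⟩
  · intro U hU
    rw [Finset.mem_powersetCard] at hU
    have hdisj : Disjoint U S := Finset.disjoint_of_subset_left hU.1 Finset.sdiff_disjoint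
    rw [Finset.mem_filter, Finset.mem_powersetCard]
    refine ⟨⟨Finset.union_subset (hU.1.trans Finset.sdiff_subset) hS, ?_⟩,
      Finset.subset_union_right⟩
    rw [Finset.card_union_of_disjoint hdisj, hU.2]
    omega
  · intro T hT
    rw [Finset.mem_filter] at hT
    exact Finset.sdiff_union_of_subset hT.2
  · intro U hU
    rw [Finset.mem_powersetCard] at hU
    have hdisj : Disjoint U S := Finset.disjoint_of_subset_left hU.1 Finset.sdiff_disjoint
    rw [Finset.union_sdiff_right, Finset.sdiff_eq_self_iff_disjoint.2 hdisj]

lemma card_filter_superset_zero {s S : Finset ι} {j : ℕ} (hj : j < S.card) :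
    ((s.powersetCard j).filter (fun T => S ⊆ T)) = ∅ := by
  rw [Finset.filter_eq_empty_iff]
  intro T hT hST
  rw [Finset.mem_powersetCard] at hT
  have := Finset.card_le_card hST
  omega

lemma sigmaEOn_shift (s : Finset ι) (j : ℕ) (x : ι → ℝ) (t : ℝ) :
    sigmaEOn s j (fun i => x i + t)
      = ∑ r ∈ Finset.range (j+1),
          ((s.card - r).choose (j - r) : ℝ) * sigmaEOn s r x * t ^ (j - r) := by
  have step1 : sigmaEOn s j (fun i => x i + t)
      = ∑ T ∈ s.powersetCard j, ∑ S ∈ T.powerset, (∏ i ∈ S, x i) * t ^ (j - S.card) := by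
    unfold sigmaEOn
    refine Finset.sum_congr rfl fun T hT => ?_
    rw [Finset.prod_add]
    refine Finset.sum_congr rfl fun S hS => ?_
    rw [Finset.prod_const]
    congr 2
    rw [Finset.card_sdiff_of_subset (Finset.mem_powerset.1 hS), (Finset.mem_powersetCard.1 hT).2]
  rw [step1]
  rw [Finset.sum_comm' (t' := s.powerset)
      (s' := fun S => (s.powersetCard j).filter (fun T => S ⊆ T))
      (fun T S => by
        simp only [Finset.mem_powerset, Finset.mem_filter, Finset.mem_powersetCard]
        constructor
        · rintro ⟨⟨hTs, hTc⟩, hST⟩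
          exact ⟨⟨⟨hTs, hTc⟩, hST⟩, hST.trans hTs⟩
        · rintro ⟨⟨⟨hTs, hTc⟩, hST⟩, _⟩
          exact ⟨⟨hTs, hTc⟩, hST⟩)]
  have step2 : ∀ S ∈ s.powerset,
      (∑ _T ∈ (s.powersetCard j).filter (fun T => S ⊆ T), (∏ i ∈ S, x i) * t ^ (j - S.card))
        = (((s.powersetCard j).filter (fun T => S ⊆ T)).card : ℝ)
            * ((∏ i ∈ S, x i) * t ^ (j - S.card)) := by
    intro S _
    rw [Finset.sum_const, nsmul_eq_mul]
  rw [Finset.sum_congr rfl step2]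
  -- group by cardinality
  rw [← Finset.sum_fiberwise_of_maps_to (g := Finset.card) (t := Finset.range (s.card + 1))
      (fun S hS => Finset.mem_range.2 (Nat.lt_succ_of_le (Finset.card_le_card
        (Finset.mem_powerset.1 hS))))]
  have step3 : ∀ r ∈ Finset.range (s.card + 1),
      (∑ S ∈ s.powerset.filter (fun S => S.card = r),
        (((s.powersetCard j).filter (fun T => S ⊆ T)).card : ℝ)
          * ((∏ i ∈ S, x i) * t ^ (j - S.card)))
      = (if r ≤ j then ((s.card - r).choose (j - r) : ℝ) * sigmaEOn s r x * t ^ (j - r) else 0) := by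
    intro r _
    rw [← Finset.powersetCard_eq_filter]
    by_cases hr : r ≤ j
    · rw [if_pos hr]
      rw [sigmaEOn, Finset.mul_sum, Finset.sum_mul]
      refine Finset.sum_congr rfl fun S hS => ?_
      rw [Finset.mem_powersetCard] at hS
      rw [card_filter_superset hS.1 (by omega : S.card ≤ j), hS.2]
      ring
    · rw [if_neg hr]
      apply Finset.sum_eq_zero
      intro S hS
      rw [Finset.mem_powersetCard] at hS
      rw [card_filter_superset_zero (by omega : j < S.card)]
      simp
  rw [Finset.sum_congr rfl step3]
  rw [Finset.sum_ite, Finset.sum_const_zero, add_zero]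
  have hfe : (Finset.range (s.card + 1)).filter (fun r => r ≤ j) = Finset.range (min s.card j + 1) := by
    ext r
    simp only [Finset.mem_filter, Finset.mem_range]
    omega
  rw [hfe]
  apply Finset.sum_subset
  · intro r hr
    rw [Finset.mem_range] at *
    omega
  · intro r hr hnr
    rw [Finset.mem_range] at *
    have : s.card < r := by omega
    rw [sigmaEOn_of_card_lt this, mul_zero, zero_mul]

/-- for `λ ∈ Γ_k`, `σ_{k-1}(λ|i) > 0` for every index `i`. -/
lemma sigmaEOn_pos_le {s : Finset ι} {x : ι → ℝ} (hx : ∀ i ∈ s, 0 < x i) (k : ℕ) :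
    0 ≤ sigmaEOn s k x := by
  rcases le_or_gt k s.card with h | h
  · exact (sigmaEOn_pos hx h).le
  · rw [sigmaEOn_of_card_lt h]

lemma garding_of_pos {n k : ℕ} (hkn : k ≤ n) {lam : Fin n → ℝ} (h : ∀ m, 0 < lam m) :
    lam ∈ gardingCone n k := by
  intro j hj1 hjk
  apply sigmaEOn_pos (fun m _ => h m)
  rw [Finset.card_univ, Fintype.card_fin]
  omega

lemma garding_shift {n k : ℕ} {lam : Fin n → ℝ} (hlam : lam ∈ gardingCone n k) {t : ℝ}
    (ht : 0 ≤ t) : (fun m => lam m + t) ∈ gardingCone n k := by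
  intro j hj1 hjk
  rw [sigmaE, sigmaEOn_shift]
  apply Finset.sum_pos'
  · intro r hr
    apply mul_nonneg (mul_nonneg (by positivity) ?_) (pow_nonneg ht _)
    rcases Nat.eq_zero_or_pos r with h0 | h1
    · subst h0; rw [sigmaEOn_zero]; norm_num
    · rw [Finset.mem_range] at hr
      exact (hlam r h1 (by omega)).le
  · refine ⟨j, Finset.self_mem_range_succ j, ?_⟩
    rw [Nat.sub_self, pow_zero, Nat.choose_zero_right, Nat.cast_one, one_mul, mul_one]
    exact hlam j hj1 hjk

lemma garding_mono {n k m : ℕ} (h : m ≤ k) {lam : Fin n → ℝ} (hlam : lam ∈ gardingCone n k) :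
    lam ∈ gardingCone n m := fun j hj1 hjm => hlam j hj1 (hjm.trans h)

theorem sigma_km1_erase_pos (n k : ℕ) (hk1 : 1 ≤ k) (hkn : k ≤ n)
    (lam : Fin n → ℝ) (hlam : lam ∈ gardingCone n k) (i : Fin n) :
    0 < sigmaEOn (Finset.univ.erase i) (k - 1) lam := by
  induction k using Nat.strong_induction_on generalizing lam with
  | _ k ih =>
  rcases Nat.lt_or_ge k 2 with hk2 | hk2
  · -- k = 1
    have : k = 1 := by omega
    subst this
    rw [Nat.sub_self, sigmaEOn_zero]
    norm_num
  -- k ≥ 2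
  have hcard_erase : (Finset.univ.erase i).card = n - 1 := by
    rw [Finset.card_erase_of_mem (Finset.mem_univ i), Finset.card_univ, Fintype.card_fin]
  -- the identity σ_k(μ) = σ_k(μ|i) + μ i σ_{k-1}(μ|i)
  have hid : ∀ (μ : Fin n → ℝ), sigmaE k μ
      = sigmaEOn (Finset.univ.erase i) k μ + μ i * sigmaEOn (Finset.univ.erase i) (k-1) μ := by
    intro μ
    have := sigmaEOn_erase (Finset.mem_univ i) (k-1) μ
    rw [show k - 1 + 1 = k by omega] at this
    exact this
  -- nonvanishing of f on the cone
  have hnv : ∀ μ ∈ gardingCone n k, sigmaEOn (Finset.univ.erase i) (k-1) μ ≠ 0 := by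
    intro μ hμ h0
    have hk' : 0 < sigmaE k μ := hμ k hk1 le_rfl
    have hEk : sigmaE k μ = sigmaEOn (Finset.univ.erase i) k μ := by
      rw [hid μ, h0, mul_zero, add_zero]
    rcases Nat.lt_or_ge (n - 1) k with hn1 | hn1
    · -- k = n : σ_k(μ|i) = 0
      rw [hEk, sigmaEOn_of_card_lt (by omega : (Finset.univ.erase i).card < k)] at hk'
      exact lt_irrefl 0 hk'
    · -- k ≤ n - 1 : use key_newton
      set A : Multiset ℝ := (Finset.univ.erase i).val.map μ with hA
      have hcardA : Multiset.card A = n - 1 := by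
        rw [hA, Multiset.card_map, ← Finset.card_def, hcard_erase]
      have hes : ∀ r, A.esymm r = sigmaEOn (Finset.univ.erase i) r μ :=
        fun r => (sigmaEOn_eq_esymm _ r μ).symm
      refine key_newton (k-1) (by omega) (n-1) A hcardA (by omega) ?_ ?_ ?_
      · intro r hr1 hrk
        rw [hes r]
        have := ih (r+1) (by omega) (by omega) (by omega) μ (garding_mono (by omega) hμ)
        rwa [Nat.add_sub_cancel] at this
      · rw [hes (k-1)]; exact h0
      · rw [show k - 1 + 1 = k by omega, hes k, ← hEk]; exact hk'
  -- continuity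
  have hcont : Continuous (fun μ : Fin n → ℝ => sigmaEOn (Finset.univ.erase i) (k-1) μ) :=
    continuous_sigmaEOn _ _
  -- the shift amount
  set T : ℝ := 1 + ∑ m, |lam m| with hT
  have hT0 : 0 ≤ T := by
    have : 0 ≤ ∑ m, |lam m| := Finset.sum_nonneg fun m _ => abs_nonneg _
    rw [hT]; linarith
  have hTpos : ∀ m, 0 < lam m + T := by
    intro m
    have h1 : |lam m| ≤ ∑ m', |lam m'| :=
      Finset.single_le_sum (fun m' _ => abs_nonneg (lam m')) (Finset.mem_univ m)
    have h2 : -|lam m| ≤ lam m := neg_abs_le (lam m)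
    rw [hT]; linarith
  -- step 1 : value at lam + T•1 is positive, via segment from the all-ones vector
  have hgT : 0 < sigmaEOn (Finset.univ.erase i) (k-1) (fun m => lam m + T) := by
    set ψ : ℝ → (Fin n → ℝ) := fun u => fun m => (1 - u) + u * (lam m + T) with hψ
    have hψmem : ∀ u ∈ Set.Icc (0:ℝ) 1, ψ u ∈ gardingCone n k := by
      intro u hu
      apply garding_of_pos hkn
      intro m
      have h1 := hTpos m
      rcases hu with ⟨hu0, hu1⟩
      show 0 < 1 - u + u * (lam m + T)
      rcases eq_or_lt_of_le hu0 with h0 | h0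
      · rw [← h0]; norm_num
      · nlinarith [mul_pos h0 h1]
    set h : ℝ → ℝ := fun u => sigmaEOn (Finset.univ.erase i) (k-1) (ψ u) with hh
    have hhc : ContinuousOn h (Set.Icc 0 1) := by
      apply Continuous.continuousOn
      apply hcont.comp
      apply continuous_pi
      intro m
      fun_prop
    have hh0 : 0 < h 0 := by
      have : ψ 0 = fun _ => (1:ℝ) := by funext m; simp [hψ]
      rw [hh]
      simp only
      rw [this]
      apply sigmaEOn_pos (fun _ _ => one_pos)
      rw [hcard_erase]; omega
    by_contra hle
    push_neg at hle
    have h1le : h 1 ≤ 0 := by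
      have : ψ 1 = fun m => lam m + T := by funext m; simp [hψ]
      rw [hh]; simp only; rw [this]; exact hle
    have hmem : (0:ℝ) ∈ Set.Icc (h 1) (h 0) := ⟨h1le, hh0.le⟩
    obtain ⟨u, hu, hu0⟩ := intermediate_value_Icc' (by norm_num : (0:ℝ) ≤ 1) hhc hmem
    exact hnv (ψ u) (hψmem u hu) hu0
  -- step 2 : bring it back to lam along lam + t•1
  by_contra hle
  push_neg at hle
  set g : ℝ → ℝ := fun t => sigmaEOn (Finset.univ.erase i) (k-1) (fun m => lam m + t) with hg
  have hgc : ContinuousOn g (Set.Icc 0 T) := by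
    apply Continuous.continuousOn
    apply hcont.comp
    apply continuous_pi
    intro m
    fun_prop
  have hg0 : g 0 ≤ 0 := by
    have : (fun m => lam m + (0:ℝ)) = lam := by funext m; ring
    rw [hg]; simp only; rw [this]; exact hle
  have hmem : (0:ℝ) ∈ Set.Icc (g 0) (g T) := ⟨hg0, hgT.le⟩
  obtain ⟨t, ht, ht0⟩ := intermediate_value_Icc hT0 hgc hmem
  exact hnv (fun m => lam m + t) (garding_shift hlam ht.1) ht0
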